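/- Let B be a building set on a finite ground set V, let N be a B-nested set, and let B₀ ∈ B be a block that is not a maximal element of B. Then the set {C ∈ N : B₀ ⊊ C} is nonempty and totally ordered by inclusion; in particular it has a unique inclusion-minimal element. -/

import Mathlib

open scoped Classical

variable {V : Type*} [Fintype V] [DecidableEq V]

/-- A building set on the finite ground set `V`. -/
def IsBuildingSet (B : Finset (Finset V)) : Prop :=
  (∀ b ∈ B, b.Nonempty) ∧
  (∀ b₁ ∈ B, ∀ b₂ ∈ B, (b₁ ∩ b₂).Nonempty → b₁ ∪ b₂ ∈ B) ∧
  (∀ v : V, {v} ∈ B)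

/-- `M` is an inclusion-maximal block of `B` strictly contained in `P`. -/
def MaxIn (B : Finset (Finset V)) (P M : Finset V) : Prop :=
  M ∈ B ∧ M ⊂ P ∧ ∀ C ∈ B, M ⊂ C → ¬ C ⊂ P

/-- The block `P` is elementary. -/
def Elementary (B : Finset (Finset V)) (P : Finset V) : Prop :=
  ∀ B' ∈ B, ∀ B'' ∈ B, B' ≠ P → B'' ≠ P → P = B' ∪ B'' → B' ∩ B'' = ∅

/-- The connected components of `U`: inclusion-maximal blocks of `B` contained in `U`. -/
noncomputable def ccSet (B : Finset (Finset V)) (U : Finset V) : Finset (Finset V) :=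
  B.filter (fun K => K ⊆ U ∧ ∀ C ∈ B, C ⊆ U → K ⊆ C → K = C)

/-- A `B`-nested set: contained in `B`, containing all maximal elements of `B`,
and such that for every subset `X` whose union lies in `B`, the union lies in `X`. -/
def IsNested (B N : Finset (Finset V)) : Prop :=
  N ⊆ B ∧
  (∀ K ∈ B, (∀ C ∈ B, K ⊆ C → K = C) → K ∈ N) ∧
  (∀ X ⊆ N, X.sup id ∈ B → X.sup id ∈ X)

/-- A maximal `B`-nested set (inclusion-maximal among `B`-nested sets). -/
def IsMaxNested (B N : Finset (Finset V)) : Prop :=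
  IsNested B N ∧ ∀ N', IsNested B N' → N ⊆ N' → N = N'

/-- Two blocks are exchangeable if two maximal nested sets differ exactly by them. -/
def ExchangeableB (B : Finset (Finset V)) (b b' : Finset V) : Prop :=
  b ≠ b' ∧ ∃ N N', IsMaxNested B N ∧ IsMaxNested B N' ∧ b ∈ N ∧ b' ∈ N' ∧
    N.erase b = N'.erase b'

/-- `P` is the parent of `b` in `N`: the unique minimal element of `{C ∈ N | b ⊊ C}`. -/
def IsParent (N : Finset (Finset V)) (b P : Finset V) : Prop :=
  P ∈ N ∧ b ⊂ P ∧ ∀ C ∈ N, b ⊂ C → P ⊆ C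

/-- `(b, b', P)` is an exchange frame. -/
def IsExchangeFrame (B : Finset (Finset V)) (b b' P : Finset V) : Prop :=
  ∃ N N', IsMaxNested B N ∧ IsMaxNested B N' ∧ b ∈ N ∧ b' ∈ N' ∧ b ≠ b' ∧
    N.erase b = N'.erase b' ∧ IsParent N b P

/-- Characteristic vector of a subset of `V` in `ℝ^V`. -/
def chi (S : Finset V) : V → ℝ := fun v => if v ∈ S then 1 else 0

/-- The root of `C` in the nested set `N`. -/
noncomputable def root (N : Finset (Finset V)) (C : Finset V) : Finset V :=
  C \ (N.filter (fun D => D ⊂ C)).sup id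

theorem stmt3 (B : Finset (Finset V)) (hB : IsBuildingSet B)
    (N : Finset (Finset V)) (hN : IsNested B N)
    (b : Finset V) (hb : b ∈ B) (hnotmax : ∃ C ∈ B, b ⊂ C) :
    (∃ C ∈ N, b ⊂ C) ∧
    (∀ C ∈ N, b ⊂ C → ∀ C' ∈ N, b ⊂ C' → C ⊆ C' ∨ C' ⊆ C) ∧
    (∃ M ∈ N, b ⊂ M ∧ ∀ C ∈ N, b ⊂ C → M ⊆ C) := by
  obtain ⟨hBne, hBunion, hBsing⟩ := hB
  obtain ⟨hNB, hNmax, hNsup⟩ := hN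
  -- total order part
  have htot : ∀ C ∈ N, b ⊂ C → ∀ C' ∈ N, b ⊂ C' → C ⊆ C' ∨ C' ⊆ C := by
    intro C hC hbC C' hC' hbC'
    have hCB : C ∈ B := hNB hC
    have hC'B : C' ∈ B := hNB hC'
    have hint : (C ∩ C').Nonempty := by
      obtain ⟨v, hv⟩ := hBne b hb
      exact ⟨v, Finset.mem_inter.2 ⟨hbC.1 hv, hbC'.1 hv⟩⟩
    have hu : C ∪ C' ∈ B := hBunion C hCB C' hC'B hint
    have hX : ({C, C'} : Finset (Finset V)) ⊆ N := by
      intro x hx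
      rcases Finset.mem_insert.1 hx with rfl | hx
      · exact hC
      · rw [Finset.mem_singleton.1 hx]; exact hC'
    have hsup : ({C, C'} : Finset (Finset V)).sup id = C ∪ C' := by
      simp [Finset.sup_insert, Finset.sup_singleton]
    have := hNsup {C, C'} hX (by rw [hsup]; exact hu)
    rw [hsup] at this
    rcases Finset.mem_insert.1 this with h | h
    · right; intro x hx; rw [← h]; exact Finset.mem_union_right _ hx
    · left; intro x hx
      rw [← Finset.mem_singleton.1 h]; exact Finset.mem_union_left _ hx
  -- existence
  have hex : ∃ C ∈ N, b ⊂ C := by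
    have hbS : b ∈ B.filter (fun K => b ⊆ K) := Finset.mem_filter.2 ⟨hb, le_refl b⟩
    obtain ⟨M, hMS, hMmax⟩ : ∃ m ∈ B.filter (fun K => b ⊆ K), ∀ x ∈ B.filter (fun K => b ⊆ K), ¬ m < x := by
      obtain ⟨m, hm⟩ := Finset.exists_maximal ⟨b, hbS⟩
      exact ⟨m, hm.1, fun x hx hlt => hlt.not_ge (hm.2 hx hlt.le)⟩
    obtain ⟨hMB, hbM⟩ := Finset.mem_filter.1 hMS
    have hMmaxB : ∀ C ∈ B, M ⊆ C → M = C := by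
      intro C hC hMC
      by_contra hne
      exact hMmax C (Finset.mem_filter.2 ⟨hC, hbM.trans hMC⟩) (lt_of_le_of_ne hMC hne)
    refine ⟨M, hNmax M hMB hMmaxB, lt_of_le_of_ne hbM ?_⟩
    rintro rfl
    obtain ⟨C, hC, hbC⟩ := hnotmax
    exact hbC.2 (hMmaxB C hC hbC.1 ▸ le_refl C)
  refine ⟨hex, htot, ?_⟩
  -- minimal element
  have hTne : (N.filter (fun C => b ⊂ C)).Nonempty := by
    obtain ⟨C, hC, hbC⟩ := hex
    exact ⟨C, Finset.mem_filter.2 ⟨hC, hbC⟩⟩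
  obtain ⟨M, hMT, hMmin⟩ : ∃ m ∈ N.filter (fun C => b ⊂ C), ∀ x ∈ N.filter (fun C => b ⊂ C), ¬ x < m := by
    obtain ⟨m, hm⟩ := Finset.exists_minimal hTne
    exact ⟨m, hm.1, fun x hx hlt => hlt.not_ge (hm.2 hx hlt.le)⟩
  obtain ⟨hMN, hbM⟩ := Finset.mem_filter.1 hMT
  refine ⟨M, hMN, hbM, ?_⟩
  intro C hC hbC
  rcases htot M hMN hbM C hC hbC with h | h
  · exact h
  · rcases eq_or_lt_of_le h with rfl | h'
    · exact le_refl C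
    · exact absurd h' (hMmin C (Finset.mem_filter.2 ⟨hC, hbC⟩))
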